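/- arXiv:2512.08460 — 3 statements merged into one kernel-verified Lean document; each statement's English description precedes it below -/
import Mathlib

section
/- Let η = (η₁, η₂) ∈ [−π, π]², let U be an open set with cl(ϖ) ∩ Ω ⊆ U ⊆ Ω, and let g be analytic on U satisfying the quasiperiodic boundary conditions g(1 + iy) = e^{iη₁} g(iy) for every y ∈ (0,1) such that iy ∈ Ω and 1 + iy ∈ Ω, and g(x + i) = e^{iη₂} g(x) for every x ∈ (0,1) such that x ∈ Ω and x + i ∈ Ω. Then there exists a function G analytic on Ω such that G(z + m) = e^{i(η₁ m₁ + η₂ m₂)} g(z) for every m ∈ Λ and every z ∈ ϖ. -/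
open Complex MeasureTheory Set Filter

noncomputable section

/-- The Gaussian integer lattice point associated to a pair of integers. -/
def latPt (p : ℤ × ℤ) : ℂ := (p.1 : ℂ) + (p.2 : ℂ) * Complex.I

/-- The open unit square `Q = (0,1) × (0,1)` in `ℂ`. -/
def QSet : Set ℂ := {z : ℂ | z.re ∈ Set.Ioo (0:ℝ) 1 ∧ z.im ∈ Set.Ioo (0:ℝ) 1}

/-- The set `S + Λ` of all translates of points of `S` by lattice points. -/
def SLat (S : Finset ℂ) : Set ℂ := {z : ℂ | ∃ s ∈ S, ∃ p : ℤ × ℤ, z = s + latPt p}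

open Metric

lemma latPt_re (p : ℤ × ℤ) : (latPt p).re = p.1 := by simp [latPt]
lemma latPt_im (p : ℤ × ℤ) : (latPt p).im = p.2 := by simp [latPt]
lemma latPt_add (p q : ℤ × ℤ) : latPt (p + q) = latPt p + latPt q := by
  simp only [latPt, Prod.fst_add, Prod.snd_add]; push_cast; ring
lemma latPt_neg (p : ℤ × ℤ) : latPt (-p) = -latPt p := by
  simp only [latPt, Prod.fst_neg, Prod.snd_neg]; push_cast; ring
lemma latPt_e1 : latPt ((1,0) : ℤ × ℤ) = 1 := by simp [latPt]
lemma latPt_e2 : latPt ((0,1) : ℤ × ℤ) = Complex.I := by simp [latPt]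

lemma isOpen_QSet : IsOpen QSet :=
  ((isOpen_Ioo.preimage Complex.continuous_re).inter (isOpen_Ioo.preimage Complex.continuous_im))

lemma closure_QSet : closure QSet = {z : ℂ | z.re ∈ Set.Icc (0:ℝ) 1 ∧ z.im ∈ Set.Icc (0:ℝ) 1} := by
  rw [show QSet = Set.Ioo (0:ℝ) 1 ×ℂ Set.Ioo (0:ℝ) 1 from rfl, Complex.closure_reProdIm,
    closure_Ioo one_ne_zero.symm]
  rfl

/-- the quasiperiodicity factor -/
def qfac (η : ℝ × ℝ) (p : ℤ × ℤ) : ℂ :=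
  Complex.exp (Complex.I * ((η.1 * p.1 + η.2 * p.2 : ℝ) : ℂ))

lemma qfac_add (η : ℝ × ℝ) (p q : ℤ × ℤ) : qfac η (p + q) = qfac η p * qfac η q := by
  rw [qfac, qfac, qfac, ← Complex.exp_add]
  congr 1
  simp only [Prod.fst_add, Prod.snd_add]
  push_cast
  ring

/-- the translated branch -/
def glu (η : ℝ × ℝ) (g : ℂ → ℂ) (p : ℤ × ℤ) : ℂ → ℂ :=
  fun w => qfac η p * g (w - latPt p)

lemma glu_analyticOnNhd {η : ℝ × ℝ} {g : ℂ → ℂ} {U : Set ℂ} (hg : AnalyticOnNhd ℂ g U)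
    (p : ℤ × ℤ) {S : Set ℂ} (hS : ∀ w ∈ S, w - latPt p ∈ U) :
    AnalyticOnNhd ℂ (glu η g p) S := by
  intro w hw
  have h1 : AnalyticAt ℂ (fun x : ℂ => x - latPt p) w := analyticAt_id.sub analyticAt_const
  exact analyticAt_const.mul (AnalyticAt.comp (f := fun x : ℂ => x - latPt p) (hg _ (hS w hw)) h1)

lemma edge1
    (Ω U : Set ℂ) (g : ℂ → ℂ) (η : ℝ × ℝ)
    (hΩopen : IsOpen Ω)
    (hΩinv : ∀ (q : ℤ × ℤ) (z : ℂ), z ∈ Ω → z - latPt q ∈ Ω)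
    (hUopen : IsOpen U)
    (hedgeU : ∀ z ∈ Ω, z ∈ closure QSet → z ∉ QSet → z ∈ U)
    (hg : AnalyticOnNhd ℂ g U)
    (hbc1 : ∀ y ∈ Set.Ioo (0:ℝ) 1, Complex.I * (y:ℂ) ∈ Ω → 1 + Complex.I * (y:ℂ) ∈ Ω →
      g (1 + Complex.I * (y:ℂ)) = Complex.exp (Complex.I * Complex.ofReal η.1) *
        g (Complex.I * (y:ℂ)))
    (p : ℤ × ℤ) (z₀ : ℂ) (hz₀ : z₀ ∈ Ω)
    (hp : z₀ - latPt p ∈ closure QSet)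
    (hq : z₀ - latPt (p + (1,0)) ∈ closure QSet) :
    ∃ r > 0, ball z₀ r ⊆ Ω ∧
      Set.EqOn (glu η g p) (glu η g (p + (1,0))) (ball z₀ r) := by
  have hlq : latPt (p + (1,0)) = latPt p + 1 := by rw [latPt_add, latPt_e1]
  set w₀ := z₀ - latPt p with hw₀def
  have hq' : w₀ - 1 ∈ closure QSet := by rwa [hlq, ← sub_sub] at hq
  rw [closure_QSet] at hp hq'
  have hre : w₀.re = 1 := by
    have h1 := hp.1.2
    have h2 := hq'.1.1
    simp only [Complex.sub_re, Complex.one_re] at h2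
    linarith
  set y₀ := w₀.im with hy₀def
  have hy₀ : y₀ ∈ Set.Icc (0:ℝ) 1 := hp.2
  have hw₀eq : w₀ = 1 + Complex.I * (y₀ : ℂ) := by
    apply Complex.ext <;> simp [hre, hy₀def]
  -- memberships in Ω and U
  have hw₀Ω : w₀ ∈ Ω := hΩinv p z₀ hz₀
  have hw₁Ω : w₀ - 1 ∈ Ω := by
    have := hΩinv (p + (1,0)) z₀ hz₀
    rwa [hlq, ← sub_sub] at this
  have hw₀U : w₀ ∈ U := by
    apply hedgeU _ hw₀Ω
    · rw [closure_QSet]; exact hp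
    · intro h
      exact absurd h.1.2 (by rw [hre]; exact lt_irrefl 1)
  have hw₁U : (w₀ - 1) ∈ U := by
    apply hedgeU _ hw₁Ω
    · rw [closure_QSet]; exact hq'
    · intro h
      have : (w₀ - 1).re = 0 := by simp [hre]
      exact absurd h.1.1 (by rw [this]; exact lt_irrefl 0)
  obtain ⟨ε₀, hε₀pos, hε₀⟩ := Metric.isOpen_iff.mp hΩopen z₀ hz₀
  obtain ⟨ε₁, hε₁pos, hε₁⟩ := Metric.isOpen_iff.mp hUopen w₀ hw₀U
  obtain ⟨ε₂, hε₂pos, hε₂⟩ := Metric.isOpen_iff.mp hUopen (w₀ - 1) hw₁U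
  set r := min (min ε₀ (1/2)) (min ε₁ ε₂) with hrdef
  have hrpos : 0 < r := by positivity
  have hrΩ : ball z₀ r ⊆ Ω :=
    (ball_subset_ball (le_trans (min_le_left _ _) (min_le_left _ _))).trans hε₀
  have hr2 : r ≤ 1/2 := le_trans (min_le_left _ _) (min_le_right _ _)
  have hballU1 : ∀ w ∈ ball z₀ r, w - latPt p ∈ U := by
    intro w hw
    apply hε₁
    rw [mem_ball, hw₀def, dist_sub_right]
    exact lt_of_lt_of_le (mem_ball.mp hw) (le_trans (min_le_right _ _) (min_le_left _ _))
  have hballU2 : ∀ w ∈ ball z₀ r, w - latPt (p + (1,0)) ∈ U := by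
    intro w hw
    apply hε₂
    rw [mem_ball, hlq, ← sub_sub, hw₀def, show w - latPt p - 1 = w - latPt p - 1 from rfl]
    rw [show z₀ - latPt p - 1 = z₀ - latPt p - 1 from rfl]
    have : dist (w - latPt p - 1) (z₀ - latPt p - 1) = dist w z₀ := by
      rw [dist_sub_right, dist_sub_right]
    rw [this]
    exact lt_of_lt_of_le (mem_ball.mp hw) (le_trans (min_le_right _ _) (min_le_right _ _))
  have hA1 : AnalyticOnNhd ℂ (glu η g p) (ball z₀ r) := glu_analyticOnNhd hg p hballU1
  have hA2 : AnalyticOnNhd ℂ (glu η g (p + (1,0))) (ball z₀ r) := glu_analyticOnNhd hg _ hballU2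
  -- choose direction of approach along the edge
  obtain ⟨s, hs1, hsy⟩ : ∃ s : ℝ, (s = 1 ∨ s = -1) ∧
      ∀ t ∈ Set.Ioo (0:ℝ) (1/2), y₀ + s * t ∈ Set.Ioo (0:ℝ) 1 := by
    rcases le_or_gt y₀ (1/2) with hc | hc
    · exact ⟨1, Or.inl rfl, fun t ht => ⟨by nlinarith [hy₀.1, ht.1], by nlinarith [ht.2]⟩⟩
    · exact ⟨-1, Or.inr rfl, fun t ht => ⟨by nlinarith [ht.2], by nlinarith [hy₀.2, ht.1]⟩⟩
  have hsne : (s : ℂ) * Complex.I ≠ 0 := by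
    rcases hs1 with h | h <;> simp [h, Complex.I_ne_zero]
  set φ : ℝ → ℂ := fun t => z₀ + (t : ℂ) * ((s : ℂ) * Complex.I) with hφdef
  have hφtend : Filter.Tendsto φ (nhdsWithin 0 (Set.Ioi 0)) (nhdsWithin z₀ {z₀}ᶜ) := by
    rw [tendsto_nhdsWithin_iff]
    constructor
    · have hcont : Continuous φ := by
        apply continuous_const.add
        exact (Complex.continuous_ofReal.mul continuous_const)
      have := hcont.tendsto 0
      simp only [hφdef, Complex.ofReal_zero, zero_mul, add_zero] at this
      exact this.mono_left nhdsWithin_le_nhds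
    · filter_upwards [self_mem_nhdsWithin] with t ht
      simp only [Set.mem_Ioi] at ht
      simp only [Set.mem_compl_iff, Set.mem_singleton_iff, hφdef]
      intro h
      have : (t : ℂ) * ((s:ℂ) * Complex.I) = 0 := by linear_combination h
      rcases mul_eq_zero.mp this with h' | h'
      · exact (ne_of_gt ht) (by exact_mod_cast h')
      · exact hsne h'
  have hfreq : ∃ᶠ z in nhdsWithin z₀ {z₀}ᶜ, glu η g p z = glu η g (p + (1,0)) z := by
    apply hφtend.frequently
    apply Filter.Eventually.frequently
    filter_upwards [Ioo_mem_nhdsGT_of_mem (Set.left_mem_Ico.mpr hrpos)] with t ht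
    -- t ∈ Ioo 0 r
    have ht2 : t ∈ Set.Ioo (0:ℝ) (1/2) := ⟨ht.1, lt_of_lt_of_le ht.2 hr2⟩
    set yt : ℝ := y₀ + s * t with hytdef
    have hyt : yt ∈ Set.Ioo (0:ℝ) 1 := hsy t ht2
    have hφball : φ t ∈ ball z₀ r := by
      rw [mem_ball, hφdef]
      simp only [dist_eq_norm, add_sub_cancel_left]
      rcases hs1 with h | h <;>
        · simp only [h, norm_mul, Complex.norm_real, Complex.norm_I, Real.norm_eq_abs,
            abs_of_pos ht.1]
          simp [abs_of_pos ht.1, ht.2]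
    have hφΩ : φ t ∈ Ω := hrΩ hφball
    have hz : z₀ = w₀ + latPt p := by rw [hw₀def]; ring
    have e1 : φ t - latPt p = 1 + Complex.I * ((yt : ℝ) : ℂ) := by
      have : φ t - latPt p = w₀ + (t:ℂ) * ((s:ℂ) * Complex.I) := by
        simp only [hφdef]; rw [hz]; ring
      rw [this, hw₀eq, hytdef]; push_cast; ring
    have e2 : φ t - latPt (p + (1,0)) = Complex.I * ((yt : ℝ) : ℂ) := by
      rw [hlq, ← sub_sub, e1]; ring
    have h1Ω : 1 + Complex.I * ((yt : ℝ) : ℂ) ∈ Ω := e1 ▸ hΩinv p (φ t) hφΩ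
    have h2Ω : Complex.I * ((yt : ℝ) : ℂ) ∈ Ω := e2 ▸ hΩinv (p + (1,0)) (φ t) hφΩ
    have hbcuse := hbc1 yt hyt h2Ω h1Ω
    have qe1 : qfac η ((1,0) : ℤ × ℤ) = Complex.exp (Complex.I * (η.1 : ℂ)) := by
      rw [qfac]; norm_num
    simp only [glu]
    rw [e1, e2, hbcuse, qfac_add, qe1]
    ring
  have := hA1.eqOn_of_preconnected_of_frequently_eq hA2
    (convex_ball z₀ r).isPreconnected (mem_ball_self hrpos) hfreq
  exact ⟨r, hrpos, hrΩ, this⟩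

lemma edge2
    (Ω U : Set ℂ) (g : ℂ → ℂ) (η : ℝ × ℝ)
    (hΩopen : IsOpen Ω)
    (hΩinv : ∀ (q : ℤ × ℤ) (z : ℂ), z ∈ Ω → z - latPt q ∈ Ω)
    (hUopen : IsOpen U)
    (hedgeU : ∀ z ∈ Ω, z ∈ closure QSet → z ∉ QSet → z ∈ U)
    (hg : AnalyticOnNhd ℂ g U)
    (hbc2 : ∀ x ∈ Set.Ioo (0:ℝ) 1, (x:ℂ) ∈ Ω → (x:ℂ) + Complex.I ∈ Ω →
      g ((x:ℂ) + Complex.I) = Complex.exp (Complex.I * Complex.ofReal η.2) * g (x:ℂ))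
    (p : ℤ × ℤ) (z₀ : ℂ) (hz₀ : z₀ ∈ Ω)
    (hp : z₀ - latPt p ∈ closure QSet)
    (hq : z₀ - latPt (p + (0,1)) ∈ closure QSet) :
    ∃ r > 0, ball z₀ r ⊆ Ω ∧
      Set.EqOn (glu η g p) (glu η g (p + (0,1))) (ball z₀ r) := by
  have hlq : latPt (p + (0,1)) = latPt p + Complex.I := by rw [latPt_add, latPt_e2]
  set w₀ := z₀ - latPt p with hw₀def
  have hq' : w₀ - Complex.I ∈ closure QSet := by rwa [hlq, ← sub_sub] at hq
  rw [closure_QSet] at hp hq'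
  have him : w₀.im = 1 := by
    have h1 := hp.2.2
    have h2 := hq'.2.1
    simp only [Complex.sub_im, Complex.I_im] at h2
    linarith
  set x₀ := w₀.re with hx₀def
  have hx₀ : x₀ ∈ Set.Icc (0:ℝ) 1 := hp.1
  have hw₀eq : w₀ = (x₀ : ℂ) + Complex.I := by
    apply Complex.ext <;> simp [him, hx₀def]
  have hw₀Ω : w₀ ∈ Ω := hΩinv p z₀ hz₀
  have hw₁Ω : w₀ - Complex.I ∈ Ω := by
    have := hΩinv (p + (0,1)) z₀ hz₀
    rwa [hlq, ← sub_sub] at this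
  have hw₀U : w₀ ∈ U := by
    apply hedgeU _ hw₀Ω
    · rw [closure_QSet]; exact hp
    · intro h
      exact absurd h.2.2 (by rw [him]; exact lt_irrefl 1)
  have hw₁U : (w₀ - Complex.I) ∈ U := by
    apply hedgeU _ hw₁Ω
    · rw [closure_QSet]; exact hq'
    · intro h
      have : (w₀ - Complex.I).im = 0 := by simp [him]
      exact absurd h.2.1 (by rw [this]; exact lt_irrefl 0)
  obtain ⟨ε₀, hε₀pos, hε₀⟩ := Metric.isOpen_iff.mp hΩopen z₀ hz₀
  obtain ⟨ε₁, hε₁pos, hε₁⟩ := Metric.isOpen_iff.mp hUopen w₀ hw₀U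
  obtain ⟨ε₂, hε₂pos, hε₂⟩ := Metric.isOpen_iff.mp hUopen (w₀ - Complex.I) hw₁U
  set r := min (min ε₀ (1/2)) (min ε₁ ε₂) with hrdef
  have hrpos : 0 < r := by positivity
  have hrΩ : ball z₀ r ⊆ Ω :=
    (ball_subset_ball (le_trans (min_le_left _ _) (min_le_left _ _))).trans hε₀
  have hr2 : r ≤ 1/2 := le_trans (min_le_left _ _) (min_le_right _ _)
  have hballU1 : ∀ w ∈ ball z₀ r, w - latPt p ∈ U := by
    intro w hw
    apply hε₁
    rw [mem_ball, hw₀def, dist_sub_right]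
    exact lt_of_lt_of_le (mem_ball.mp hw) (le_trans (min_le_right _ _) (min_le_left _ _))
  have hballU2 : ∀ w ∈ ball z₀ r, w - latPt (p + (0,1)) ∈ U := by
    intro w hw
    apply hε₂
    rw [mem_ball, hlq, ← sub_sub, hw₀def]
    have : dist (w - latPt p - Complex.I) (z₀ - latPt p - Complex.I) = dist w z₀ := by
      rw [dist_sub_right, dist_sub_right]
    rw [this]
    exact lt_of_lt_of_le (mem_ball.mp hw) (le_trans (min_le_right _ _) (min_le_right _ _))
  have hA1 : AnalyticOnNhd ℂ (glu η g p) (ball z₀ r) := glu_analyticOnNhd hg p hballU1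
  have hA2 : AnalyticOnNhd ℂ (glu η g (p + (0,1))) (ball z₀ r) := glu_analyticOnNhd hg _ hballU2
  obtain ⟨s, hs1, hsy⟩ : ∃ s : ℝ, (s = 1 ∨ s = -1) ∧
      ∀ t ∈ Set.Ioo (0:ℝ) (1/2), x₀ + s * t ∈ Set.Ioo (0:ℝ) 1 := by
    rcases le_or_gt x₀ (1/2) with hc | hc
    · exact ⟨1, Or.inl rfl, fun t ht => ⟨by nlinarith [hx₀.1, ht.1], by nlinarith [ht.2]⟩⟩
    · exact ⟨-1, Or.inr rfl, fun t ht => ⟨by nlinarith [ht.2], by nlinarith [hx₀.2, ht.1]⟩⟩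
  have hsne : (s : ℂ) ≠ 0 := by
    rcases hs1 with h | h <;> simp [h]
  set φ : ℝ → ℂ := fun t => z₀ + (t : ℂ) * (s : ℂ) with hφdef
  have hφtend : Filter.Tendsto φ (nhdsWithin 0 (Set.Ioi 0)) (nhdsWithin z₀ {z₀}ᶜ) := by
    rw [tendsto_nhdsWithin_iff]
    constructor
    · have hcont : Continuous φ := by
        apply continuous_const.add
        exact (Complex.continuous_ofReal.mul continuous_const)
      have := hcont.tendsto 0
      simp only [hφdef, Complex.ofReal_zero, zero_mul, add_zero] at this
      exact this.mono_left nhdsWithin_le_nhds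
    · filter_upwards [self_mem_nhdsWithin] with t ht
      simp only [Set.mem_Ioi] at ht
      simp only [Set.mem_compl_iff, Set.mem_singleton_iff, hφdef]
      intro h
      have : (t : ℂ) * (s:ℂ) = 0 := by linear_combination h
      rcases mul_eq_zero.mp this with h' | h'
      · exact (ne_of_gt ht) (by exact_mod_cast h')
      · exact hsne h'
  have hfreq : ∃ᶠ z in nhdsWithin z₀ {z₀}ᶜ, glu η g p z = glu η g (p + (0,1)) z := by
    apply hφtend.frequently
    apply Filter.Eventually.frequently
    filter_upwards [Ioo_mem_nhdsGT_of_mem (Set.left_mem_Ico.mpr hrpos)] with t ht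
    have ht2 : t ∈ Set.Ioo (0:ℝ) (1/2) := ⟨ht.1, lt_of_lt_of_le ht.2 hr2⟩
    set xt : ℝ := x₀ + s * t with hxtdef
    have hxt : xt ∈ Set.Ioo (0:ℝ) 1 := hsy t ht2
    have hφball : φ t ∈ ball z₀ r := by
      rw [mem_ball, hφdef]
      simp only [dist_eq_norm, add_sub_cancel_left]
      rcases hs1 with h | h <;>
        · simp only [h, norm_mul, Complex.norm_real, Real.norm_eq_abs, abs_of_pos ht.1]
          simp [abs_of_pos ht.1, ht.2]
    have hφΩ : φ t ∈ Ω := hrΩ hφball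
    have hz : z₀ = w₀ + latPt p := by rw [hw₀def]; ring
    have e1 : φ t - latPt p = ((xt : ℝ) : ℂ) + Complex.I := by
      have : φ t - latPt p = w₀ + (t:ℂ) * (s:ℂ) := by
        simp only [hφdef]; rw [hz]; ring
      rw [this, hw₀eq, hxtdef]; push_cast; ring
    have e2 : φ t - latPt (p + (0,1)) = ((xt : ℝ) : ℂ) := by
      rw [hlq, ← sub_sub, e1]; ring
    have h1Ω : ((xt : ℝ) : ℂ) + Complex.I ∈ Ω := e1 ▸ hΩinv p (φ t) hφΩ
    have h2Ω : ((xt : ℝ) : ℂ) ∈ Ω := e2 ▸ hΩinv (p + (0,1)) (φ t) hφΩ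
    have hbcuse := hbc2 xt hxt h2Ω h1Ω
    have qe2 : qfac η ((0,1) : ℤ × ℤ) = Complex.exp (Complex.I * (η.2 : ℂ)) := by
      rw [qfac]; norm_num
    simp only [glu]
    rw [e1, e2, hbcuse, qfac_add, qe2]
    ring
  have := hA1.eqOn_of_preconnected_of_frequently_eq hA2
    (convex_ball z₀ r).isPreconnected (mem_ball_self hrpos) hfreq
  exact ⟨r, hrpos, hrΩ, this⟩

lemma mainLemma
    (Ω U : Set ℂ) (g : ℂ → ℂ) (η : ℝ × ℝ)
    (hΩopen : IsOpen Ω)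
    (hΩinv : ∀ (q : ℤ × ℤ) (z : ℂ), z ∈ Ω → z - latPt q ∈ Ω)
    (hUopen : IsOpen U)
    (hedgeU : ∀ z ∈ Ω, z ∈ closure QSet → z ∉ QSet → z ∈ U)
    (hg : AnalyticOnNhd ℂ g U)
    (hbc1 : ∀ y ∈ Set.Ioo (0:ℝ) 1, Complex.I * (y:ℂ) ∈ Ω → 1 + Complex.I * (y:ℂ) ∈ Ω →
      g (1 + Complex.I * (y:ℂ)) = Complex.exp (Complex.I * Complex.ofReal η.1) *
        g (Complex.I * (y:ℂ)))
    (hbc2 : ∀ x ∈ Set.Ioo (0:ℝ) 1, (x:ℂ) ∈ Ω → (x:ℂ) + Complex.I ∈ Ω →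
      g ((x:ℂ) + Complex.I) = Complex.exp (Complex.I * Complex.ofReal η.2) * g (x:ℂ))
    (p q : ℤ × ℤ) (z₀ : ℂ) (hz₀ : z₀ ∈ Ω)
    (hp : z₀ - latPt p ∈ closure QSet)
    (hq : z₀ - latPt q ∈ closure QSet) :
    ∃ r > 0, ball z₀ r ⊆ Ω ∧ Set.EqOn (glu η g p) (glu η g q) (ball z₀ r) := by
  have E1 := edge1 Ω U g η hΩopen hΩinv hUopen hedgeU hg hbc1
  have E2 := edge2 Ω U g η hΩopen hΩinv hUopen hedgeU hg hbc2
  have hpc : z₀.re - (p.1:ℝ) ∈ Set.Icc (0:ℝ) 1 ∧ z₀.im - (p.2:ℝ) ∈ Set.Icc (0:ℝ) 1 := by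
    rw [closure_QSet] at hp
    simpa [Complex.sub_re, Complex.sub_im, latPt_re, latPt_im] using hp
  have hqc : z₀.re - (q.1:ℝ) ∈ Set.Icc (0:ℝ) 1 ∧ z₀.im - (q.2:ℝ) ∈ Set.Icc (0:ℝ) 1 := by
    rw [closure_QSet] at hq
    simpa [Complex.sub_re, Complex.sub_im, latPt_re, latPt_im] using hq
  obtain ⟨a, b, hq1, hq2⟩ : ∃ a b : ℤ, q.1 = p.1 + a ∧ q.2 = p.2 + b :=
    ⟨q.1 - p.1, q.2 - p.2, by ring, by ring⟩
  rw [hq1, hq2] at hqc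
  push_cast at hqc hpc
  have hqe : q = p + (a, b) := by
    rw [Prod.ext_iff]
    exact ⟨by simpa using hq1, by simpa using hq2⟩
  have ha : a = -1 ∨ a = 0 ∨ a = 1 := by
    have h1 : (a:ℝ) ≤ 1 := by linarith [hpc.1.2, hqc.1.1]
    have h2 : (-1:ℝ) ≤ (a:ℝ) := by linarith [hpc.1.1, hqc.1.2]
    have h1' : a ≤ 1 := by exact_mod_cast h1
    have h2' : -1 ≤ a := by exact_mod_cast h2
    omega
  have hb : b = -1 ∨ b = 0 ∨ b = 1 := by
    have h1 : (b:ℝ) ≤ 1 := by linarith [hpc.2.2, hqc.2.1]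
    have h2 : (-1:ℝ) ≤ (b:ℝ) := by linarith [hpc.2.1, hqc.2.2]
    have h1' : b ≤ 1 := by exact_mod_cast h1
    have h2' : -1 ≤ b := by exact_mod_cast h2
    omega
  -- helper for closure membership of intermediate lattice points
  have hmem : ∀ m : ℤ × ℤ, z₀.re - (m.1:ℝ) ∈ Set.Icc (0:ℝ) 1 → z₀.im - (m.2:ℝ) ∈ Set.Icc (0:ℝ) 1 →
      z₀ - latPt m ∈ closure QSet := by
    intro m h1 h2
    rw [closure_QSet]
    constructor <;> simp [Complex.sub_re, Complex.sub_im, latPt_re, latPt_im, h1, h2]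
  simp only [Set.mem_Icc] at hpc hqc
  rcases ha with ha | ha | ha <;> rcases hb with hb | hb | hb <;> subst ha hb hqe <;>
    (try push_cast at hqc)
  -- (-1,-1)
  · have hm : z₀ - latPt (p + (0,-1)) ∈ closure QSet := by
      apply hmem <;> simp only [Prod.fst_add, Prod.snd_add] <;> push_cast <;>
        rw [Set.mem_Icc] <;> constructor <;>
        linarith [hpc.1.1, hpc.1.2, hpc.2.1, hpc.2.2, hqc.1.1, hqc.1.2, hqc.2.1, hqc.2.2]
    have i1 : p + (-1,-1) + ((1,0) : ℤ×ℤ) = p + (0,-1) := by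
      rw [Prod.ext_iff]; constructor <;> simp only [Prod.fst_add, Prod.snd_add] <;> omega
    have i2 : p + (0,-1) + ((0,1) : ℤ×ℤ) = p := by
      rw [Prod.ext_iff]; constructor <;> simp only [Prod.fst_add, Prod.snd_add] <;> omega
    obtain ⟨r₁, hr₁, hr₁Ω, eq1⟩ := E1 (p + (-1,-1)) z₀ hz₀ hq (by rw [i1]; exact hm)
    obtain ⟨r₂, hr₂, hr₂Ω, eq2⟩ := E2 (p + (0,-1)) z₀ hz₀ hm (by rw [i2]; exact hp)
    rw [i1] at eq1; rw [i2] at eq2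
    refine ⟨min r₁ r₂, by positivity, (ball_subset_ball (min_le_left _ _)).trans hr₁Ω, ?_⟩
    intro w hw
    exact ((eq2 (ball_subset_ball (min_le_right _ _) hw)).symm.trans
      (eq1 (ball_subset_ball (min_le_left _ _) hw)).symm)
  -- (-1,0)
  · have i1 : p + (-1,0) + ((1,0) : ℤ×ℤ) = p := by
      rw [Prod.ext_iff]; constructor <;> simp only [Prod.fst_add, Prod.snd_add] <;> omega
    obtain ⟨r₁, hr₁, hr₁Ω, eq1⟩ := E1 (p + (-1,0)) z₀ hz₀ hq (by rw [i1]; exact hp)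
    rw [i1] at eq1
    exact ⟨r₁, hr₁, hr₁Ω, fun w hw => (eq1 hw).symm⟩
  -- (-1,1)
  · have hm : z₀ - latPt (p + (0,1)) ∈ closure QSet := by
      apply hmem <;> simp only [Prod.fst_add, Prod.snd_add] <;> push_cast <;>
        rw [Set.mem_Icc] <;> constructor <;>
        linarith [hpc.1.1, hpc.1.2, hpc.2.1, hpc.2.2, hqc.1.1, hqc.1.2, hqc.2.1, hqc.2.2]
    have i1 : p + (-1,1) + ((1,0) : ℤ×ℤ) = p + (0,1) := by
      rw [Prod.ext_iff]; constructor <;> simp only [Prod.fst_add, Prod.snd_add] <;> omega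
    obtain ⟨r₁, hr₁, hr₁Ω, eq1⟩ := E1 (p + (-1,1)) z₀ hz₀ hq (by rw [i1]; exact hm)
    obtain ⟨r₂, hr₂, hr₂Ω, eq2⟩ := E2 p z₀ hz₀ hp hm
    rw [i1] at eq1
    refine ⟨min r₁ r₂, by positivity, (ball_subset_ball (min_le_left _ _)).trans hr₁Ω, ?_⟩
    intro w hw
    exact ((eq2 (ball_subset_ball (min_le_right _ _) hw)).trans
      (eq1 (ball_subset_ball (min_le_left _ _) hw)).symm)
  -- (0,-1)
  · have i1 : p + (0,-1) + ((0,1) : ℤ×ℤ) = p := by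
      rw [Prod.ext_iff]; constructor <;> simp only [Prod.fst_add, Prod.snd_add] <;> omega
    obtain ⟨r₁, hr₁, hr₁Ω, eq1⟩ := E2 (p + (0,-1)) z₀ hz₀ hq (by rw [i1]; exact hp)
    rw [i1] at eq1
    exact ⟨r₁, hr₁, hr₁Ω, fun w hw => (eq1 hw).symm⟩
  -- (0,0)
  · obtain ⟨ε, hεpos, hε⟩ := Metric.isOpen_iff.mp hΩopen z₀ hz₀
    have i1 : p + ((0,0) : ℤ×ℤ) = p := by
      rw [Prod.ext_iff]; constructor <;> simp only [Prod.fst_add, Prod.snd_add] <;> omega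
    rw [i1]
    exact ⟨ε, hεpos, hε, fun w _ => rfl⟩
  -- (0,1)
  · exact E2 p z₀ hz₀ hp hq
  -- (1,-1)
  · have hm : z₀ - latPt (p + (1,0)) ∈ closure QSet := by
      apply hmem <;> simp only [Prod.fst_add, Prod.snd_add] <;> push_cast <;>
        rw [Set.mem_Icc] <;> constructor <;>
        linarith [hpc.1.1, hpc.1.2, hpc.2.1, hpc.2.2, hqc.1.1, hqc.1.2, hqc.2.1, hqc.2.2]
    have i1 : p + (1,-1) + ((0,1) : ℤ×ℤ) = p + (1,0) := by
      rw [Prod.ext_iff]; constructor <;> simp only [Prod.fst_add, Prod.snd_add] <;> omega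
    obtain ⟨r₁, hr₁, hr₁Ω, eq1⟩ := E1 p z₀ hz₀ hp hm
    obtain ⟨r₂, hr₂, hr₂Ω, eq2⟩ := E2 (p + (1,-1)) z₀ hz₀ hq (by rw [i1]; exact hm)
    rw [i1] at eq2
    refine ⟨min r₁ r₂, by positivity, (ball_subset_ball (min_le_left _ _)).trans hr₁Ω, ?_⟩
    intro w hw
    exact ((eq1 (ball_subset_ball (min_le_left _ _) hw)).trans
      (eq2 (ball_subset_ball (min_le_right _ _) hw)).symm)
  -- (1,0)
  · exact E1 p z₀ hz₀ hp hq
  -- (1,1)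
  · have hm : z₀ - latPt (p + (1,0)) ∈ closure QSet := by
      apply hmem <;> simp only [Prod.fst_add, Prod.snd_add] <;> push_cast <;>
        rw [Set.mem_Icc] <;> constructor <;>
        linarith [hpc.1.1, hpc.1.2, hpc.2.1, hpc.2.2, hqc.1.1, hqc.1.2, hqc.2.1, hqc.2.2]
    have i1 : p + (1,0) + ((0,1) : ℤ×ℤ) = p + (1,1) := by
      rw [Prod.ext_iff]; constructor <;> simp only [Prod.fst_add, Prod.snd_add] <;> omega
    obtain ⟨r₁, hr₁, hr₁Ω, eq1⟩ := E1 p z₀ hz₀ hp hm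
    obtain ⟨r₂, hr₂, hr₂Ω, eq2⟩ := E2 (p + (1,0)) z₀ hz₀ hm (by rw [i1]; exact hq)
    rw [i1] at eq2
    refine ⟨min r₁ r₂, by positivity, (ball_subset_ball (min_le_left _ _)).trans hr₁Ω, ?_⟩
    intro w hw
    exact ((eq1 (ball_subset_ball (min_le_left _ _) hw)).trans
      (eq2 (ball_subset_ball (min_le_right _ _) hw)))

/-- gluing a quasiperiodic analytic function on a neighborhood of the
closed periodic cell into an analytic function on the whole periodic domain `Ω`. -/
theorem stmt13
    (ϖ : Set ℂ) (hϖopen : IsOpen ϖ) (hϖne : ϖ.Nonempty) (hϖQ : ϖ ⊆ QSet)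
    (hbdry : frontier QSet ⊆ frontier ϖ)
    (hcompl : ∃ V : Set ℂ, IsOpen V ∧ V.Nonempty ∧ V ⊆ QSet \ closure ϖ)
    (Ω : Set ℂ)
    (hΩ : Ω = interior (⋃ p : ℤ × ℤ, closure ((fun z => z + latPt p) '' ϖ)))
    (η : ℝ × ℝ) (hη : η ∈ Set.Icc ((-Real.pi, -Real.pi) : ℝ × ℝ) (Real.pi, Real.pi))
    (U : Set ℂ) (hUopen : IsOpen U) (hU1 : closure ϖ ∩ Ω ⊆ U) (hU2 : U ⊆ Ω)
    (g : ℂ → ℂ) (hg : AnalyticOnNhd ℂ g U)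
    (hbc1 : ∀ y ∈ Set.Ioo (0:ℝ) 1, Complex.I * (y:ℂ) ∈ Ω → 1 + Complex.I * (y:ℂ) ∈ Ω →
      g (1 + Complex.I * (y:ℂ)) = Complex.exp (Complex.I * Complex.ofReal η.1) *
        g (Complex.I * (y:ℂ)))
    (hbc2 : ∀ x ∈ Set.Ioo (0:ℝ) 1, (x:ℂ) ∈ Ω → (x:ℂ) + Complex.I ∈ Ω →
      g ((x:ℂ) + Complex.I) = Complex.exp (Complex.I * Complex.ofReal η.2) * g (x:ℂ)) :
    ∃ G : ℂ → ℂ, AnalyticOnNhd ℂ G Ω ∧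
      ∀ p : ℤ × ℤ, ∀ z ∈ ϖ,
        G (z + latPt p) = Complex.exp (Complex.I *
          Complex.ofReal (η.1 * (latPt p).re + η.2 * (latPt p).im)) * g z := by
  set T := ⋃ p : ℤ × ℤ, closure ((fun z => z + latPt p) '' ϖ) with hTdef
  have hT : ∀ z : ℂ, z ∈ T ↔ ∃ p : ℤ × ℤ, z - latPt p ∈ closure ϖ := by
    intro z
    rw [hTdef, Set.mem_iUnion]
    refine exists_congr fun p => ?_
    have h1 : closure ((fun w => w + latPt p) '' ϖ)
        = (fun w => w + latPt p) '' closure ϖ := by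
      rw [← Homeomorph.coe_addRight (latPt p), Homeomorph.image_closure]
    rw [h1]
    constructor
    · rintro ⟨w, hw, rfl⟩
      simpa [add_sub_cancel_right] using hw
    · intro h
      exact ⟨z - latPt p, h, sub_add_cancel z (latPt p)⟩
  have hΩopen : IsOpen Ω := by rw [hΩ]; exact isOpen_interior
  have hTinv : ∀ (q : ℤ × ℤ) (z : ℂ), z ∈ T → z + latPt q ∈ T := by
    intro q z hz
    obtain ⟨p, hp⟩ := (hT z).mp hz
    refine (hT _).mpr ⟨p + q, ?_⟩
    have : z + latPt q - latPt (p + q) = z - latPt p := by rw [latPt_add]; ring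
    rwa [this]
  have hΩinvPlus : ∀ (q : ℤ × ℤ) (z : ℂ), z ∈ Ω → z + latPt q ∈ Ω := by
    intro q z hz
    rw [hΩ] at hz ⊢
    have hpre : T = (fun w => w + latPt q) ⁻¹' T := by
      ext w
      constructor
      · exact fun h => hTinv q w h
      · intro h
        have := hTinv (-q) _ h
        rwa [latPt_neg, add_assoc, add_neg_cancel, add_zero] at this
      
    have h1 : z ∈ interior ((fun w => w + latPt q) ⁻¹' T) := by rw [← hpre]; exact hz
    rw [← Homeomorph.coe_addRight (latPt q), ← Homeomorph.preimage_interior] at h1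
    exact h1
  have hΩinv : ∀ (q : ℤ × ℤ) (z : ℂ), z ∈ Ω → z - latPt q ∈ Ω := by
    intro q z hz
    have := hΩinvPlus (-q) z hz
    rwa [latPt_neg, ← sub_eq_add_neg] at this
  have hΩsub : ∀ z ∈ Ω, ∃ p : ℤ × ℤ, z - latPt p ∈ closure ϖ := by
    intro z hz
    rw [hΩ] at hz
    exact (hT z).mp (interior_subset hz)
  have hϖΩ : ϖ ⊆ Ω := by
    rw [hΩ]
    refine interior_maximal (fun z hz => (hT z).mpr ⟨(0,0), ?_⟩) hϖopen
    rw [show latPt ((0,0) : ℤ × ℤ) = 0 by simp [latPt], sub_zero]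
    exact subset_closure hz
  have hclQ : closure ϖ ⊆ closure QSet := closure_mono hϖQ
  have hedgeU : ∀ z ∈ Ω, z ∈ closure QSet → z ∉ QSet → z ∈ U := by
    intro z hz h1 h2
    refine hU1 ⟨?_, hz⟩
    have hf : z ∈ frontier QSet := by
      rw [frontier, isOpen_QSet.interior_eq]
      exact ⟨h1, h2⟩
    exact frontier_subset_closure (hbdry hf)
  have ML := mainLemma Ω U g η hΩopen hΩinv hUopen hedgeU hg hbc1 hbc2
  classical
  have hselex : ∀ z : ℂ, ∃ p : ℤ × ℤ, z ∈ Ω → z - latPt p ∈ closure ϖ := by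
    intro z
    by_cases h : z ∈ Ω
    · obtain ⟨p, hp⟩ := hΩsub z h
      exact ⟨p, fun _ => hp⟩
    · exact ⟨(0,0), fun h' => absurd h' h⟩
  choose sel hsel using hselex
  refine ⟨fun z => glu η g (sel z) z, ?_, ?_⟩
  · -- analyticity
    intro z₀ hz₀
    obtain ⟨p₀, hp₀⟩ := hΩsub z₀ hz₀
    have hw₀U : z₀ - latPt p₀ ∈ U := hU1 ⟨hp₀, hΩinv p₀ z₀ hz₀⟩
    obtain ⟨εU, hεUpos, hεU⟩ := Metric.isOpen_iff.mp hUopen _ hw₀U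
    obtain ⟨εΩ, hεΩpos, hεΩ⟩ := Metric.isOpen_iff.mp hΩopen z₀ hz₀
    set A : ℤ := ⌊z₀.re⌋ with hA
    set B : ℤ := ⌊z₀.im⌋ with hB
    set δ : ℝ := min (min ((A : ℝ) + 1 - z₀.re) (z₀.re + 1 - ⌈z₀.re⌉))
      (min ((B : ℝ) + 1 - z₀.im) (z₀.im + 1 - ⌈z₀.im⌉)) with hδ
    have hδpos : 0 < δ := by
      have f1 := Int.lt_floor_add_one z₀.re
      have f2 := Int.ceil_lt_add_one z₀.re
      have f3 := Int.lt_floor_add_one z₀.im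
      have f4 := Int.ceil_lt_add_one z₀.im
      rw [hδ]
      refine lt_min (lt_min (by linarith) (by linarith)) (lt_min (by linarith) (by linarith))
    have key : ∀ q : ℤ × ℤ, ∀ w ∈ ball z₀ δ, w - latPt q ∈ closure QSet →
        z₀ - latPt q ∈ closure QSet ∧ (q.1 = A - 1 ∨ q.1 = A) ∧ (q.2 = B - 1 ∨ q.2 = B) := by
      intro q w hw hq
      rw [closure_QSet] at hq
      simp only [Set.mem_setOf_eq, Complex.sub_re, Complex.sub_im, latPt_re, latPt_im,
        Set.mem_Icc] at hq
      have hwre : |w.re - z₀.re| < δ := by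
        calc |w.re - z₀.re| = |(w - z₀).re| := by rw [Complex.sub_re]
        _ ≤ ‖w - z₀‖ := Complex.abs_re_le_norm _
        _ < δ := by rw [← Complex.dist_eq]; exact mem_ball.mp hw
      have hwim : |w.im - z₀.im| < δ := by
        calc |w.im - z₀.im| = |(w - z₀).im| := by rw [Complex.sub_im]
        _ ≤ ‖w - z₀‖ := Complex.abs_im_le_norm _
        _ < δ := by rw [← Complex.dist_eq]; exact mem_ball.mp hw
      have habs1 := abs_lt.mp hwre
      have habs2 := abs_lt.mp hwim
      have hd1 : δ ≤ (A : ℝ) + 1 - z₀.re := le_trans (min_le_left _ _) (min_le_left _ _)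
      have hd2 : δ ≤ z₀.re + 1 - ⌈z₀.re⌉ := le_trans (min_le_left _ _) (min_le_right _ _)
      have hd3 : δ ≤ (B : ℝ) + 1 - z₀.im := le_trans (min_le_right _ _) (min_le_left _ _)
      have hd4 : δ ≤ z₀.im + 1 - ⌈z₀.im⌉ := le_trans (min_le_right _ _) (min_le_right _ _)
      -- re bounds for q.1
      have hq1le : (q.1 : ℝ) ≤ z₀.re := by
        by_contra hcon
        push_neg at hcon
        have : A < q.1 := Int.floor_lt.mpr hcon
        have : (A : ℝ) + 1 ≤ (q.1 : ℝ) := by exact_mod_cast this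
        linarith [hq.1.1]
      have hq1ge : z₀.re - 1 ≤ (q.1 : ℝ) := by
        by_contra hcon
        push_neg at hcon
        have h' : (q.1 : ℝ) + 1 < z₀.re := by linarith
        have hc1 : q.1 + 1 < ⌈z₀.re⌉ := Int.lt_ceil.mpr (by exact_mod_cast h')
        have hc2 : q.1 + 2 ≤ ⌈z₀.re⌉ := by omega
        have : ((q.1 + 2 : ℤ) : ℝ) ≤ (⌈z₀.re⌉ : ℝ) := by exact_mod_cast hc2
        push_cast at this
        linarith [hq.1.2]
      have hq2le : (q.2 : ℝ) ≤ z₀.im := by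
        by_contra hcon
        push_neg at hcon
        have : B < q.2 := Int.floor_lt.mpr hcon
        have : (B : ℝ) + 1 ≤ (q.2 : ℝ) := by exact_mod_cast this
        linarith [hq.2.1]
      have hq2ge : z₀.im - 1 ≤ (q.2 : ℝ) := by
        by_contra hcon
        push_neg at hcon
        have h' : (q.2 : ℝ) + 1 < z₀.im := by linarith
        have hc1 : q.2 + 1 < ⌈z₀.im⌉ := Int.lt_ceil.mpr (by exact_mod_cast h')
        have hc2 : q.2 + 2 ≤ ⌈z₀.im⌉ := by omega
        have : ((q.2 + 2 : ℤ) : ℝ) ≤ (⌈z₀.im⌉ : ℝ) := by exact_mod_cast hc2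
        push_cast at this
        linarith [hq.2.2]
      refine ⟨?_, ?_, ?_⟩
      · rw [closure_QSet]
        simp only [Set.mem_setOf_eq, Complex.sub_re, Complex.sub_im, latPt_re, latPt_im,
          Set.mem_Icc]
        refine ⟨⟨?_, ?_⟩, ?_, ?_⟩ <;> linarith
      · have h1 : q.1 ≤ A := Int.le_floor.mpr hq1le
        have h2 : A - 1 ≤ q.1 := by
          have : ((A : ℤ) : ℝ) - 1 ≤ (q.1 : ℝ) := by
            have := Int.floor_le z₀.re
            linarith
          exact_mod_cast this
        omega
      · have h1 : q.2 ≤ B := Int.le_floor.mpr hq2le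
        have h2 : B - 1 ≤ q.2 := by
          have : ((B : ℤ) : ℝ) - 1 ≤ (q.2 : ℝ) := by
            have := Int.floor_le z₀.im
            linarith
          exact_mod_cast this
        omega
    -- radii from the main lemma for the four candidates
    have Hq : ∀ q : ℤ × ℤ, ∃ r > 0, (z₀ - latPt q ∈ closure QSet →
        Set.EqOn (glu η g q) (glu η g p₀) (ball z₀ r)) := by
      intro q
      by_cases h : z₀ - latPt q ∈ closure QSet
      · obtain ⟨r, hr, _, heq⟩ := ML q p₀ z₀ hz₀ h (hclQ hp₀)
        exact ⟨r, hr, fun _ => heq⟩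
      · exact ⟨1, one_pos, fun h' => absurd h' h⟩
    choose ρ hρpos hρeq using Hq
    set r : ℝ := min (min δ (min εU εΩ))
      (min (min (ρ (A-1, B-1)) (ρ (A-1, B))) (min (ρ (A, B-1)) (ρ (A, B)))) with hr
    have hrpos : 0 < r := by
      refine lt_min (lt_min hδpos (lt_min hεUpos hεΩpos)) (lt_min (lt_min ?_ ?_) (lt_min ?_ ?_))
      all_goals apply hρpos
    have hrδ : r ≤ δ := le_trans (min_le_left _ _) (min_le_left _ _)
    have hrεU : r ≤ εU := le_trans (min_le_left _ _) (le_trans (min_le_right _ _) (min_le_left _ _))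
    have hrεΩ : r ≤ εΩ := le_trans (min_le_left _ _) (le_trans (min_le_right _ _) (min_le_right _ _))
    have hballΩ : ball z₀ r ⊆ Ω := (ball_subset_ball hrεΩ).trans hεΩ
    have hballU : ∀ w ∈ ball z₀ r, w - latPt p₀ ∈ U := by
      intro w hw
      apply hεU
      rw [mem_ball, dist_sub_right]
      exact lt_of_lt_of_le (mem_ball.mp hw) hrεU
    have hglu : AnalyticAt ℂ (glu η g p₀) z₀ :=
      glu_analyticOnNhd hg p₀ hballU z₀ (mem_ball_self hrpos)
    apply hglu.congr
    apply Filter.eventuallyEq_of_mem (Metric.ball_mem_nhds z₀ hrpos)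
    intro w hw
    have hwΩ : w ∈ Ω := hballΩ hw
    have hwcl : w - latPt (sel w) ∈ closure ϖ := hsel w hwΩ
    show glu η g p₀ w = glu η g (sel w) w
    obtain ⟨hcl, hc1, hc2⟩ := key (sel w) w (ball_subset_ball hrδ hw) (hclQ hwcl)
    have hrρ : r ≤ ρ (sel w) := by
      rcases hc1 with h1 | h1 <;> rcases hc2 with h2 | h2 <;>
        rw [show sel w = ((sel w).1, (sel w).2) from rfl, h1, h2] <;>
        · rw [hr]
          first
            | exact le_trans (min_le_right _ _) (le_trans (min_le_left _ _) (min_le_left _ _))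
            | exact le_trans (min_le_right _ _) (le_trans (min_le_left _ _) (min_le_right _ _))
            | exact le_trans (min_le_right _ _) (le_trans (min_le_right _ _) (min_le_left _ _))
            | exact le_trans (min_le_right _ _) (le_trans (min_le_right _ _) (min_le_right _ _))
    exact (hρeq (sel w) hcl (ball_subset_ball hrρ hw)).symm
  · -- quasiperiodicity
    intro p z hz
    have hzΩ : z + latPt p ∈ Ω := hΩinvPlus p z (hϖΩ hz)
    have hwcl : z + latPt p - latPt (sel (z + latPt p)) ∈ closure ϖ := hsel _ hzΩ
    show glu η g (sel (z + latPt p)) (z + latPt p) = _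
    obtain ⟨r, hrpos, _, heq⟩ := ML (sel (z + latPt p)) p (z + latPt p) hzΩ (hclQ hwcl)
      (by rw [add_sub_cancel_right]; exact subset_closure (hϖQ hz))
    have := heq (mem_ball_self hrpos)
    rw [this]
    simp only [glu, qfac, add_sub_cancel_right, latPt_re, latPt_im]
end
end

section
/- Let H be a complex Hilbert space, let M and N be closed subspaces of H with orthogonal projections P onto M and Q onto N, and let J : H → H be a continuous linear bijection with continuous inverse such that J(M) = N. Let ε ∈ (0,1] and suppose ‖I − J‖ ≤ ε and ‖I − J⁻¹‖ ≤ ε (operator norms, I the identity on H). Then ‖P − Q‖ ≤ 8 √ε. -/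
open Complex

private lemma proj_min {H : Type*} [NormedAddCommGroup H] [InnerProductSpace ℂ H]
    (R : H →L[ℂ] H)
    (hsa : ∀ x y : H, (inner ℂ (R x) y : ℂ) = inner ℂ x (R y))
    (hidem : R.comp R = R) (x n : H) (hn : n ∈ LinearMap.range (R : H →ₗ[ℂ] H)) :
    ‖x - R x‖ ≤ ‖x - n‖ := by
  obtain ⟨z, rfl⟩ := hn
  have h2 : R (R z) = R z := by simpa using DFunLike.congr_fun hidem z
  have h2x : R (R x) = R x := by simpa using DFunLike.congr_fun hidem x
  have horth : (inner ℂ (x - R x) (R z - R x) : ℂ) = 0 := by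
    have : R z - R x = R (z - x) := by simp
    rw [this, ← hsa]
    simp [map_sub, h2x]
  have hdecomp : x - R z = (x - R x) + (R x - R z) := by abel
  have hsq : ‖x - R z‖ ^ 2 = ‖x - R x‖ ^ 2 + ‖R x - R z‖ ^ 2 := by
    rw [hdecomp, @norm_add_sq ℂ]
    have : (inner ℂ (x - R x) (R x - R z) : ℂ) = 0 := by
      have := horth
      rw [show R x - R z = -(R z - R x) by abel, inner_neg_right, this]
      simp
    rw [this]
    simp
  change ‖x - R x‖ ≤ ‖x - R z‖
  nlinarith [norm_nonneg (x - R x), norm_nonneg (x - R z), norm_nonneg (R x - R z)]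

private lemma proj_contr {H : Type*} [NormedAddCommGroup H] [InnerProductSpace ℂ H]
    (R : H →L[ℂ] H)
    (hsa : ∀ x y : H, (inner ℂ (R x) y : ℂ) = inner ℂ x (R y))
    (hidem : R.comp R = R) (x : H) : ‖R x‖ ≤ ‖x‖ := by
  have h2 : R (R x) = R x := by simpa using DFunLike.congr_fun hidem x
  have key : ‖R x‖ ^ 2 ≤ ‖x‖ * ‖R x‖ := by
    have h1 : RCLike.re (inner ℂ (R x) (R x) : ℂ) = ‖R x‖ ^ 2 := by
      rw [inner_self_eq_norm_sq]
    have h3 : (inner ℂ (R x) (R x) : ℂ) = inner ℂ x (R x) := by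
      rw [hsa x (R x), h2]
    have h4 : RCLike.re (inner ℂ x (R x) : ℂ) ≤ ‖x‖ * ‖R x‖ := by
      calc RCLike.re (inner ℂ x (R x) : ℂ) ≤ ‖(inner ℂ x (R x) : ℂ)‖ := RCLike.re_le_norm _
        _ ≤ ‖x‖ * ‖R x‖ := norm_inner_le_norm _ _
    rw [← h1, h3]; exact h4
  rcases eq_or_lt_of_le (norm_nonneg (R x)) with h | h
  · rw [← h]; exact norm_nonneg x
  · nlinarith

/-- if `J` is a continuous linear bijection with `J(M) = N` which is
`ε`-close to the identity together with its inverse, then the orthogonal projections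
onto `M` and `N` satisfy `‖P − Q‖ ≤ 8√ε`. -/
theorem stmt14
    {H : Type*} [NormedAddCommGroup H] [InnerProductSpace ℂ H] [CompleteSpace H]
    (M N : Submodule ℂ H) (hM : IsClosed (M : Set H)) (hN : IsClosed (N : Set H))
    (P Q : H →L[ℂ] H)
    (hPsa : ∀ x y : H, (inner ℂ (P x) y : ℂ) = inner ℂ x (P y))
    (hPidem : P.comp P = P) (hPran : LinearMap.range (P : H →ₗ[ℂ] H) = M)
    (hQsa : ∀ x y : H, (inner ℂ (Q x) y : ℂ) = inner ℂ x (Q y))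
    (hQidem : Q.comp Q = Q) (hQran : LinearMap.range (Q : H →ₗ[ℂ] H) = N)
    (J : H ≃L[ℂ] H) (hJMN : M.map (J : H →ₗ[ℂ] H) = N)
    (ε : ℝ) (hε : ε ∈ Set.Ioc (0:ℝ) 1)
    (hJ : ‖ContinuousLinearMap.id ℂ H - (J : H →L[ℂ] H)‖ ≤ ε)
    (hJi : ‖ContinuousLinearMap.id ℂ H - (J.symm : H →L[ℂ] H)‖ ≤ ε) :
    ‖P - Q‖ ≤ 8 * Real.sqrt ε := by
  obtain ⟨hε0, hε1⟩ := hε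
  have hPi : ∀ x : H, P (P x) = P x := fun x => by simpa using DFunLike.congr_fun hPidem x
  have hQi : ∀ x : H, Q (Q x) = Q x := fun x => by simpa using DFunLike.congr_fun hQidem x
  -- E1 : points of M are ε-close to their Q-projection
  have E1 : ∀ x : H, x ∈ M → ‖x - Q x‖ ≤ ε * ‖x‖ := by
    intro x hx
    have hJx : J x ∈ LinearMap.range (Q : H →ₗ[ℂ] H) := by
      rw [hQran, ← hJMN]
      exact ⟨x, hx, rfl⟩
    calc ‖x - Q x‖ ≤ ‖x - J x‖ := proj_min Q hQsa hQidem x (J x) hJx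
      _ = ‖(ContinuousLinearMap.id ℂ H - (J : H →L[ℂ] H)) x‖ := by
          simp [ContinuousLinearMap.sub_apply]
      _ ≤ ‖ContinuousLinearMap.id ℂ H - (J : H →L[ℂ] H)‖ * ‖x‖ :=
          ContinuousLinearMap.le_opNorm _ x
      _ ≤ ε * ‖x‖ := mul_le_mul_of_nonneg_right hJ (norm_nonneg x)
  -- E2 : points of N are 2ε-close to their P-projection
  have E2 : ∀ y : H, y ∈ N → ‖y - P y‖ ≤ 2 * ε * ‖y‖ := by
    intro y hy
    rw [← hJMN] at hy
    obtain ⟨m, hm, hJm⟩ := hy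
    have hmrange : m ∈ LinearMap.range (P : H →ₗ[ℂ] H) := by rw [hPran]; exact hm
    have hmnorm : ‖m‖ ≤ 2 * ‖y‖ := by
      have hminv : m = J.symm y := by
        rw [← hJm]; simp
      have : ‖y - J.symm y‖ ≤ ε * ‖y‖ := by
        calc ‖y - J.symm y‖
            = ‖(ContinuousLinearMap.id ℂ H - (J.symm : H →L[ℂ] H)) y‖ := by
              simp [ContinuousLinearMap.sub_apply]
          _ ≤ ‖ContinuousLinearMap.id ℂ H - (J.symm : H →L[ℂ] H)‖ * ‖y‖ :=
              ContinuousLinearMap.le_opNorm _ y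
          _ ≤ ε * ‖y‖ := mul_le_mul_of_nonneg_right hJi (norm_nonneg y)
      have h5 : ‖J.symm y‖ ≤ ‖y‖ + ε * ‖y‖ := by
        calc ‖J.symm y‖ = ‖y - (y - J.symm y)‖ := by rw [sub_sub_cancel]
          _ ≤ ‖y‖ + ‖y - J.symm y‖ := norm_sub_le _ _
          _ ≤ ‖y‖ + ε * ‖y‖ := by linarith
      rw [hminv]
      nlinarith [norm_nonneg y]
    calc ‖y - P y‖ ≤ ‖y - m‖ := proj_min P hPsa hPidem y m hmrange
      _ = ‖(ContinuousLinearMap.id ℂ H - (J : H →L[ℂ] H)) m‖ := by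
          rw [← hJm]; simp [ContinuousLinearMap.sub_apply, norm_sub_rev]
      _ ≤ ‖ContinuousLinearMap.id ℂ H - (J : H →L[ℂ] H)‖ * ‖m‖ :=
          ContinuousLinearMap.le_opNorm _ m
      _ ≤ ε * ‖m‖ := mul_le_mul_of_nonneg_right hJ (norm_nonneg m)
      _ ≤ ε * (2 * ‖y‖) := mul_le_mul_of_nonneg_left hmnorm hε0.le
      _ = 2 * ε * ‖y‖ := by ring
  -- pointwise bound on (P - Q) x
  have key : ∀ x : H, ‖(P - Q) x‖ ≤ 3 * ε * ‖x‖ := by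
    intro x
    set a := P (x - Q x) with ha
    set b := Q x - P (Q x) with hb
    have haM : a ∈ M := hPran ▸ ⟨x - Q x, rfl⟩
    have hPa : P a = a := hPi _
    -- adjoint trick for a
    have hasq : ‖a‖ ^ 2 ≤ ε * ‖x‖ * ‖a‖ := by
      have h1 : RCLike.re (inner ℂ a a : ℂ) = ‖a‖ ^ 2 := by rw [inner_self_eq_norm_sq]
      have h2 : (inner ℂ a a : ℂ) = inner ℂ x (a - Q a) := by
        calc (inner ℂ a a : ℂ) = inner ℂ (P (x - Q x)) a := by rw [← ha]
          _ = inner ℂ (x - Q x) (P a) := hPsa _ _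
          _ = inner ℂ (x - Q x) a := by rw [hPa]
          _ = inner ℂ x a - inner ℂ (Q x) a := by rw [inner_sub_left]
          _ = inner ℂ x a - inner ℂ x (Q a) := by rw [hQsa]
          _ = inner ℂ x (a - Q a) := by rw [inner_sub_right]
      have h3 : RCLike.re (inner ℂ x (a - Q a) : ℂ) ≤ ‖x‖ * ‖a - Q a‖ := by
        calc RCLike.re (inner ℂ x (a - Q a) : ℂ) ≤ ‖(inner ℂ x (a - Q a) : ℂ)‖ := RCLike.re_le_norm _
          _ ≤ ‖x‖ * ‖a - Q a‖ := norm_inner_le_norm _ _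
      have h4 : ‖a - Q a‖ ≤ ε * ‖a‖ := E1 a haM
      calc ‖a‖ ^ 2 = RCLike.re (inner ℂ x (a - Q a) : ℂ) := by rw [← h1, h2]
        _ ≤ ‖x‖ * ‖a - Q a‖ := h3
        _ ≤ ‖x‖ * (ε * ‖a‖) := mul_le_mul_of_nonneg_left h4 (norm_nonneg x)
        _ = ε * ‖x‖ * ‖a‖ := by ring
    have hanorm : ‖a‖ ≤ ε * ‖x‖ := by
      rcases eq_or_lt_of_le (norm_nonneg a) with h | h
      · rw [← h]; positivity
      · nlinarith
    have hbnorm : ‖b‖ ≤ 2 * ε * ‖x‖ := by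
      have hQxN : Q x ∈ N := hQran ▸ ⟨x, rfl⟩
      calc ‖b‖ ≤ 2 * ε * ‖Q x‖ := E2 (Q x) hQxN
        _ ≤ 2 * ε * ‖x‖ := by
            have := proj_contr Q hQsa hQidem x
            nlinarith
    have hdecomp : (P - Q) x = a - b := by
      simp only [ContinuousLinearMap.sub_apply, ha, hb, map_sub]
      abel
    calc ‖(P - Q) x‖ = ‖a - b‖ := by rw [hdecomp]
      _ ≤ ‖a‖ + ‖b‖ := norm_sub_le _ _
      _ ≤ ε * ‖x‖ + 2 * ε * ‖x‖ := add_le_add hanorm hbnorm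
      _ = 3 * ε * ‖x‖ := by ring
  have h3ε : 3 * ε ≤ 8 * Real.sqrt ε := by
    have hs := Real.sq_sqrt hε0.le
    have hs0 := Real.sqrt_nonneg ε
    have hs1 : Real.sqrt ε ≤ 1 := by
      rw [show (1:ℝ) = Real.sqrt 1 by simp]
      exact Real.sqrt_le_sqrt hε1
    nlinarith
  refine ContinuousLinearMap.opNorm_le_bound _ (by positivity) fun x => ?_
  calc ‖(P - Q) x‖ ≤ 3 * ε * ‖x‖ := key x
    _ ≤ 8 * Real.sqrt ε * ‖x‖ := mul_le_mul_of_nonneg_right h3ε (norm_nonneg x)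
end

section
/- Let K be a compact topological space, let X be a complex Banach space, and let T : K → B(X) be continuous with respect to the operator norm on the space B(X) of bounded linear operators on X. Then the union ⋃_{k∈K} σ(T(k)) of the spectra of the operators T(k) is a closed subset of ℂ. -/
/-- for a norm-continuous family of bounded operators indexed by a compact
space, the union of the spectra is closed. -/
theorem stmt16
    {K : Type*} [TopologicalSpace K] [CompactSpace K]
    {X : Type*} [NormedAddCommGroup X] [NormedSpace ℂ X] [CompleteSpace X]
    (T : K → X →L[ℂ] X) (hT : Continuous T) :
    IsClosed (⋃ k : K, spectrum ℂ (T k)) := by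
  have hS : IsClosed {p : K × ℂ | p.2 ∈ spectrum ℂ (T p.1)} := by
    have : {p : K × ℂ | p.2 ∈ spectrum ℂ (T p.1)} =
        (fun p : K × ℂ => algebraMap ℂ (X →L[ℂ] X) p.2 - T p.1) ⁻¹'
          {a | IsUnit a}ᶜ := by
      ext p
      simp [spectrum.mem_iff]
    rw [this]
    exact (Units.isOpen.isClosed_compl).preimage
      (((algebraMapCLM ℂ (X →L[ℂ] X)).continuous.comp continuous_snd).sub
        (hT.comp continuous_fst))
  have : (⋃ k : K, spectrum ℂ (T k)) =
      Prod.snd '' {p : K × ℂ | p.2 ∈ spectrum ℂ (T p.1)} := by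
    ext z
    simp only [Set.mem_iUnion, Set.mem_image, Set.mem_setOf_eq, Prod.exists]
    constructor
    · rintro ⟨k, hk⟩; exact ⟨k, z, hk, rfl⟩
    · rintro ⟨k, w, hw, rfl⟩; exact ⟨k, hw⟩
  rw [this]
  exact isClosedMap_snd_of_compactSpace _ hS
end
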